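/- Let (P, y) be a KZ doctrine on a 2-category 𝒞. If L : A ⟶ B and K : B ⟶ C are P-admissible 1-cells, then the composite K·L : A ⟶ C is P-admissible. -/

import Mathlib

open CategoryTheory Bicategory

universe w v u

variable {𝒞 : Type u} [Bicategory.{w, v} 𝒞]

/-- A 2-cell `η : I ⟶ L ≫ R` exhibits `R` as a left extension of `I` along `L` when
pasting with `η` gives a bijection between 2-cells `R ⟶ M` and 2-cells `I ⟶ L ≫ M`. -/
def ExhibitsLeftExt {a b c : 𝒞} (L : a ⟶ b) (I : a ⟶ c) (R : b ⟶ c)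
    (η : I ⟶ L ≫ R) : Prop :=
  ∀ M : b ⟶ c, Function.Bijective (fun σ : R ⟶ M => η ≫ L ◁ σ)

/-- The left extension `(R, η)` of `I` along `L` is respected by `E` when the whiskering of
`η` by `E` exhibits `R ≫ E` as a left extension of `I ≫ E` along `L`. -/
def RespectsLeftExt {a b c d : 𝒞} (L : a ⟶ b) (I : a ⟶ c) (R : b ⟶ c)
    (η : I ⟶ L ≫ R) (E : c ⟶ d) : Prop :=
  ExhibitsLeftExt L (I ≫ E) (R ≫ E) ((η ▷ E) ≫ (α_ L R E).hom)

/-- A 2-cell `η : I ⟶ L ≫ R` exhibits `L` as a left lifting of `I` through `R` when pasting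
with `η` gives a bijection between 2-cells `L ⟶ K` and 2-cells `I ⟶ K ≫ R`. -/
def ExhibitsLeftLift {a b c : 𝒞} (R : b ⟶ c) (I : a ⟶ c) (L : a ⟶ b)
    (η : I ⟶ L ≫ R) : Prop :=
  ∀ K : a ⟶ b, Function.Bijective (fun δ : L ⟶ K => η ≫ δ ▷ R)

/-- The left lifting is absolute when it is preserved by whiskering with any 1-cell `F`. -/
def ExhibitsAbsLeftLift {a b c : 𝒞} (R : b ⟶ c) (I : a ⟶ c) (L : a ⟶ b)
    (η : I ⟶ L ≫ R) : Prop :=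
  ∀ {x : 𝒞} (F : x ⟶ a),
    ExhibitsLeftLift R (F ≫ I) (F ≫ L) ((F ◁ η) ≫ (α_ F L R).inv)

/-- A 1-cell is (representably) fully faithful when whiskering by it is bijective on 2-cells. -/
def FullyFaithful1Cell {a b : 𝒞} (F : a ⟶ b) : Prop :=
  ∀ {x : 𝒞} (u v : x ⟶ a), Function.Bijective (fun σ : u ⟶ v => σ ▷ F)

/-- A KZ doctrine on a 2-category (Marmolejo–Wood style, in terms of left extensions). -/
structure KZDoctrine (𝒞 : Type u) [Bicategory.{w, v} 𝒞] where
  /-- action on objects -/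
  P : 𝒞 → 𝒞
  /-- the units -/
  y : ∀ A : 𝒞, A ⟶ P A
  /-- chosen left extensions along the units -/
  ext : ∀ {A C : 𝒞}, (A ⟶ P C) → (P A ⟶ P C)
  /-- the invertible 2-cells exhibiting the chosen left extensions -/
  c : ∀ {A C : 𝒞} (F : A ⟶ P C), F ≅ y A ≫ ext F
  ext_isLeftExt : ∀ {A C : 𝒞} (F : A ⟶ P C),
    ExhibitsLeftExt (y A) F (ext F) (c F).hom
  /-- (a) the identity 2-cell exhibits `𝟙 (P A)` as a left extension of `y A` along `y A` -/
  y_selfExt : ∀ A : 𝒞, ExhibitsLeftExt (y A) (y A) (𝟙 (P A)) (ρ_ (y A)).inv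
  /-- (b) the chosen left extensions respect each other -/
  ext_respects : ∀ {A B C : 𝒞} (F : A ⟶ P B) (G : B ⟶ P C),
    RespectsLeftExt (y A) F (ext F) (c F).hom (ext G)

/-- `lan L` (also denoted `PL`), the chosen left extension of `y B ∘ L` along `y A`. -/
abbrev KZDoctrine.lan (D : KZDoctrine 𝒞) {A B : 𝒞} (L : A ⟶ B) : D.P A ⟶ D.P B :=
  D.ext (L ≫ D.y B)

/-- An object `X` is `P`-cocomplete when every `G : A ⟶ X` admits a left extension along
`y A` exhibited by an invertible 2-cell, and these left extensions respect the chosen left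
extensions of the KZ doctrine. -/
def PCocomplete (D : KZDoctrine 𝒞) (X : 𝒞) : Prop :=
  ∀ {A : 𝒞} (G : A ⟶ X), ∃ (Gb : D.P A ⟶ X) (cG : G ≅ D.y A ≫ Gb),
    ExhibitsLeftExt (D.y A) G Gb cG.hom ∧
    ∀ {A' : 𝒞} (F : A' ⟶ D.P A),
      RespectsLeftExt (D.y A') F (D.ext F) (D.c F).hom Gb

/-- A 1-cell is a `P`-homomorphism when it respects all left extensions along units. -/
def PHomomorphism (D : KZDoctrine 𝒞) {X Y : 𝒞} (E : X ⟶ Y) : Prop :=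
  ∀ {A : 𝒞} (G : A ⟶ X) (Gb : D.P A ⟶ X) (η : G ⟶ D.y A ≫ Gb),
    ExhibitsLeftExt (D.y A) G Gb η → RespectsLeftExt (D.y A) G Gb η E

/-- The data `(R, φ)` witnesses `P`-admissibility of `L`: `φ` exhibits `R` as a left
extension of `y A` along `L`, and this left extension is respected by every left extension
`Hb : P A ⟶ X` along `y A` into every `P`-cocomplete object `X`. -/
def AdmissibleData (D : KZDoctrine 𝒞) {A B : 𝒞} (L : A ⟶ B) (R : B ⟶ D.P A)
    (φ : D.y A ⟶ L ≫ R) : Prop :=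
  ExhibitsLeftExt L (D.y A) R φ ∧
  ∀ {X : 𝒞}, PCocomplete D X →
    ∀ (H : A ⟶ X) (Hb : D.P A ⟶ X) (cH : H ≅ D.y A ≫ Hb),
      ExhibitsLeftExt (D.y A) H Hb cH.hom → RespectsLeftExt L (D.y A) R φ Hb

/-- A 1-cell `L` is `P`-admissible when some `(R, φ)` witnesses its admissibility. -/
def PAdmissible (D : KZDoctrine 𝒞) {A B : 𝒞} (L : A ⟶ B) : Prop :=
  ∃ (R : B ⟶ D.P A) (φ : D.y A ⟶ L ≫ R), AdmissibleData D L R φ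

section Aux

/-- Precomposition with an isomorphism is bijective on 2-cells. -/
lemma precomp_bij {a b : 𝒞} {u v : a ⟶ b} (e : u ≅ v) :
    ∀ w : a ⟶ b, Function.Bijective (fun σ : v ⟶ w => e.hom ≫ σ) := by
  intro w
  refine ⟨fun σ τ h => ?_, fun τ => ⟨e.inv ≫ τ, by simp⟩⟩
  simpa using congrArg (fun ρ => e.inv ≫ ρ) h

/-- Postcomposition with an isomorphism is bijective on 2-cells. -/
lemma postcomp_bij {a b : 𝒞} {u v : a ⟶ b} (e : u ≅ v) :
    ∀ w : a ⟶ b, Function.Bijective (fun σ : w ⟶ u => σ ≫ e.hom) := by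
  intro w
  refine ⟨fun σ τ h => ?_, fun τ => ⟨τ ≫ e.inv, by simp⟩⟩
  simpa using congrArg (fun ρ => ρ ≫ e.inv) h

/-- Transport of the left-extension property along isomorphisms of the data. -/
lemma exhibits_transport {a b c : 𝒞} (L : a ⟶ b) {I I' : a ⟶ c} {R R' : b ⟶ c}
    {η : I ⟶ L ≫ R} (h : ExhibitsLeftExt L I R η)
    (i : I ≅ I') (r : R ≅ R') (η' : I' ⟶ L ≫ R')
    (hη : i.hom ≫ η' = η ≫ L ◁ r.hom) :
    ExhibitsLeftExt L I' R' η' := by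
  intro M
  have key : (fun σ : R' ⟶ M => η' ≫ L ◁ σ)
      = (fun τ : I ⟶ L ≫ M => i.inv ≫ τ) ∘ (fun σ : R ⟶ M => η ≫ L ◁ σ)
        ∘ (fun σ : R' ⟶ M => r.hom ≫ σ) := by
    funext σ
    have : η' ≫ L ◁ σ = i.inv ≫ (i.hom ≫ η') ≫ L ◁ σ := by simp
    rw [this, hη]
    simp [Bicategory.whiskerLeft_comp]
  rw [key]
  exact (precomp_bij i.symm _).comp ((h M).comp (precomp_bij r M))

/-- Any two left extensions of the same 2-cell are isomorphic. -/
lemma exhibits_iso {a b c : 𝒞} (L : a ⟶ b) (I : a ⟶ c) {R R' : b ⟶ c}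
    {η : I ⟶ L ≫ R} {η' : I ⟶ L ≫ R'}
    (h : ExhibitsLeftExt L I R η) (h' : ExhibitsLeftExt L I R' η') :
    Nonempty (R ≅ R') := by
  obtain ⟨f, hf⟩ := (h R').2 η'
  obtain ⟨g, hg⟩ := (h' R).2 η
  refine ⟨⟨f, g, ?_, ?_⟩⟩
  · apply (h R).1
    simp only [Bicategory.whiskerLeft_comp, ← Category.assoc] at *
    rw [hf, hg]; simp
  · apply (h' R').1
    simp only [Bicategory.whiskerLeft_comp, ← Category.assoc] at *
    rw [hg, hf]; simp

/-- Respecting a left extension is stable under isomorphism of the respecting 1-cell. -/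
lemma respects_of_iso {a b c d : 𝒞} (L : a ⟶ b) (I : a ⟶ c) (R : b ⟶ c)
    (η : I ⟶ L ≫ R) {E E' : c ⟶ d} (τ : E ≅ E')
    (h : RespectsLeftExt L I R η E) : RespectsLeftExt L I R η E' := by
  refine exhibits_transport L h (whiskerLeftIso I τ) (whiskerLeftIso R τ) _ ?_
  simp only [whiskerLeftIso_hom]
  rw [whisker_exchange_assoc, Category.assoc, associator_naturality_right]

/-- The free object `P A` is `P`-cocomplete. -/
lemma pcocomplete_P (D : KZDoctrine 𝒞) (A : 𝒞) : PCocomplete D (D.P A) :=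
  fun G => ⟨D.ext G, D.c G, D.ext_isLeftExt G, fun F => D.ext_respects F G⟩

/-- The key composition lemma for left extensions in the admissibility situation. -/
lemma main_ext {a b c p x : 𝒞} (L : a ⟶ b) (K : b ⟶ c) (u : b ⟶ p)
    (RK : c ⟶ p) (φK : u ⟶ K ≫ RK) (E : p ⟶ x)
    (V : a ⟶ x) (W : b ⟶ x) (ψ : V ⟶ L ≫ W) (e : W ≅ u ≫ E)
    (hψ : ExhibitsLeftExt L V W ψ)
    (hK : ExhibitsLeftExt K (u ≫ E) (RK ≫ E) ((φK ▷ E) ≫ (α_ K RK E).hom))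
    (T : c ⟶ x) (t : T ≅ RK ≫ E) (θ : V ⟶ (L ≫ K) ≫ T)
    (hθ : θ ≫ (L ≫ K) ◁ t.hom
      = ψ ≫ L ◁ (e.hom ≫ (φK ▷ E) ≫ (α_ K RK E).hom) ≫ (α_ L K (RK ≫ E)).inv) :
    ExhibitsLeftExt (L ≫ K) V T θ := by
  intro M
  have key : (fun σ : T ⟶ M => θ ≫ (L ≫ K) ◁ σ)
      = (fun τ : V ⟶ L ≫ (K ≫ M) => τ ≫ (α_ L K M).symm.hom)
        ∘ (fun ρ : W ⟶ K ≫ M => ψ ≫ L ◁ ρ)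
        ∘ (fun ν : u ≫ E ⟶ K ≫ M => e.hom ≫ ν)
        ∘ (fun σ' : RK ≫ E ⟶ M => ((φK ▷ E) ≫ (α_ K RK E).hom) ≫ K ◁ σ')
        ∘ (fun σ : T ⟶ M => t.symm.hom ≫ σ) := by
    funext σ
    dsimp
    have h1 : θ ≫ (L ≫ K) ◁ σ = (θ ≫ (L ≫ K) ◁ t.hom) ≫ (L ≫ K) ◁ (t.inv ≫ σ) := by
      simp only [Category.assoc, ← Bicategory.whiskerLeft_comp, Iso.hom_inv_id_assoc]
    rw [h1, hθ]
    simp only [Category.assoc]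
    rw [← associator_inv_naturality_right]
    simp [Bicategory.whiskerLeft_comp]
  rw [key]
  exact (postcomp_bij (α_ L K M).symm V).comp ((hψ (K ≫ M)).comp
    ((precomp_bij e _).comp ((hK M).comp (precomp_bij t.symm M))))

end Aux

/-- `P`-admissible 1-cells are closed under composition. -/
theorem stmt9 (D : KZDoctrine 𝒞) {A B C : 𝒞} (L : A ⟶ B) (K : B ⟶ C)
    (hL : PAdmissible D L) (hK : PAdmissible D K) : PAdmissible D (L ≫ K) := by
  obtain ⟨RL, φL, hL1, hL2⟩ := hL
  obtain ⟨RK, φK, hK1, hK2⟩ := hK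
  have hPA : PCocomplete D (D.P A) := pcocomplete_P D A
  have hresp : RespectsLeftExt K (D.y B) RK φK (D.ext RL) :=
    hK2 hPA RL (D.ext RL) (D.c RL) (D.ext_isLeftExt RL)
  refine ⟨RK ≫ D.ext RL,
    φL ≫ L ◁ ((D.c RL).hom ≫ (φK ▷ D.ext RL) ≫ (α_ K RK (D.ext RL)).hom)
      ≫ (α_ L K (RK ≫ D.ext RL)).inv, ?_, ?_⟩
  · exact main_ext L K (D.y B) RK φK (D.ext RL) (D.y A) RL φL (D.c RL) hL1 hresp
      _ (Iso.refl _) _ (by simp)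
  · intro X hX H Hb cH hHb
    obtain ⟨Gb, cG, hGb, hGresp⟩ := hX H
    obtain ⟨τ⟩ := exhibits_iso (D.y A) H hGb hHb
    have hHbResp : RespectsLeftExt (D.y B) RL (D.ext RL) (D.c RL).hom Hb :=
      respects_of_iso _ _ _ _ τ (hGresp RL)
    have hψ : ExhibitsLeftExt L (D.y A ≫ Hb) (RL ≫ Hb) ((φL ▷ Hb) ≫ (α_ L RL Hb).hom) :=
      hL2 hX H Hb cH hHb
    set e : RL ≫ Hb ≅ D.y B ≫ (D.ext RL ≫ Hb) :=
      whiskerRightIso (D.c RL) Hb ≪≫ α_ (D.y B) (D.ext RL) Hb with he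
    have he' : e.hom = ((D.c RL).hom ▷ Hb) ≫ (α_ (D.y B) (D.ext RL) Hb).hom := by
      simp [he]
    have hExh : ExhibitsLeftExt (D.y B) (RL ≫ Hb) (D.ext RL ≫ Hb) e.hom := by
      rw [he']; exact hHbResp
    have hK' : RespectsLeftExt K (D.y B) RK φK (D.ext RL ≫ Hb) :=
      hK2 hX (RL ≫ Hb) (D.ext RL ≫ Hb) e hExh
    refine main_ext L K (D.y B) RK φK (D.ext RL ≫ Hb) (D.y A ≫ Hb) (RL ≫ Hb)
      ((φL ▷ Hb) ≫ (α_ L RL Hb).hom) e hψ hK'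
      ((RK ≫ D.ext RL) ≫ Hb) (α_ RK (D.ext RL) Hb) _ ?_
    rw [he']
    bicategory
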